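/- Let c1, c2, c3, z1, z2, z3 be real numbers such that e^{z1}+e^{z2}+e^{z3} ≥ e^{c1}+e^{c2}+e^{c3}, e^{-z1}+e^{-z2}+e^{-z3} ≥ e^{-c1}+e^{-c2}+e^{-c3}, and z1+z2+z3 = c1+c2+c3. Then z1^2+z2^2+z3^2 ≥ c1^2+c2^2+c3^2. -/

import Mathlib

set_option maxHeartbeats 1000000

open MeasureTheory Real Set Filter Topology

/-- The kernel function: `gg s t = (e^s - 1)/((t+e^s)(t+1))`. -/
noncomputable def gg (s t : ℝ) : ℝ := (Real.exp s - 1) / ((t + Real.exp s) * (t + 1))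

/-- `ff z t = (log(t+e^z) - log(t+1) - z/(t+1))/t`. -/
noncomputable def ff (z t : ℝ) : ℝ :=
  (Real.log (t + Real.exp z) - Real.log (t + 1) - z / (t + 1)) / t

lemma gg_hasDeriv (s : ℝ) {t : ℝ} (ht : 0 ≤ t) :
    HasDerivAt (fun u => Real.log (u + 1) - Real.log (u + Real.exp s)) (gg s t) t := by
  have h1 : (0:ℝ) < t + 1 := by linarith
  have h2 : (0:ℝ) < t + Real.exp s := add_pos_of_nonneg_of_pos ht (Real.exp_pos s)
  have d1 : HasDerivAt (fun u : ℝ => Real.log (u + 1)) (t + 1)⁻¹ t := by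
    have hi : HasDerivAt (fun u : ℝ => u + 1) 1 t := (hasDerivAt_id t).add_const 1
    exact ((Real.hasDerivAt_log h1.ne').comp t hi).congr_deriv (mul_one _)
  have d2 : HasDerivAt (fun u : ℝ => Real.log (u + Real.exp s)) (t + Real.exp s)⁻¹ t := by
    have hi : HasDerivAt (fun u : ℝ => u + Real.exp s) 1 t :=
      (hasDerivAt_id t).add_const (Real.exp s)
    exact ((Real.hasDerivAt_log h2.ne').comp t hi).congr_deriv (mul_one _)
  have := d1.sub d2
  refine this.congr_deriv (Eq.symm ?_)
  rw [inv_sub_inv h1.ne' h2.ne']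
  unfold gg
  rw [mul_comm (t + 1)]
  congr 1
  ring

lemma G_tendsto (s : ℝ) :
    Tendsto (fun u : ℝ => Real.log (u + 1) - Real.log (u + Real.exp s)) atTop (𝓝 0) := by
  have t1 : Tendsto (fun u : ℝ => 1 + (1 - Real.exp s) / (u + Real.exp s)) atTop (𝓝 (1 + 0)) :=
    tendsto_const_nhds.add
      (Filter.Tendsto.div_atTop tendsto_const_nhds (tendsto_atTop_add_const_right _ _ tendsto_id))
  rw [add_zero] at t1
  have t0 : Tendsto (fun u : ℝ => (u + 1) / (u + Real.exp s)) atTop (𝓝 1) := by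
    refine Tendsto.congr' ?_ t1
    filter_upwards [eventually_gt_atTop 0] with u hu
    have h2 : (0:ℝ) < u + Real.exp s := add_pos hu (Real.exp_pos s)
    field_simp
    ring
  have t2 := (Real.continuousAt_log one_ne_zero).tendsto.comp t0
  rw [Real.log_one] at t2
  refine Tendsto.congr' ?_ t2
  filter_upwards [eventually_gt_atTop 0] with u hu
  have h1 : (0:ℝ) < u + 1 := by linarith
  have h2 : (0:ℝ) < u + Real.exp s := add_pos hu (Real.exp_pos s)
  simp [Function.comp, Real.log_div h1.ne' h2.ne']

lemma gg_int (s : ℝ) :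
    IntegrableOn (gg s) (Ioi 0) volume ∧ (∫ t in Ioi (0:ℝ), gg s t) = s := by
  have hcont : ContinuousWithinAt
      (fun u : ℝ => Real.log (u + 1) - Real.log (u + Real.exp s)) (Ici 0) 0 :=
    (gg_hasDeriv s le_rfl).continuousAt.continuousWithinAt
  have hderiv : ∀ x ∈ Ioi (0:ℝ),
      HasDerivAt (fun u : ℝ => Real.log (u + 1) - Real.log (u + Real.exp s)) (gg s x) x :=
    fun x hx => gg_hasDeriv s (le_of_lt hx)
  have hG0 : (fun u : ℝ => Real.log (u + 1) - Real.log (u + Real.exp s)) 0 = -s := by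
    norm_num [Real.log_exp]
  rcases le_total 0 s with hs | hs
  · have hpos : ∀ x ∈ Ioi (0:ℝ), 0 ≤ gg s x := by
      intro x hx
      have hx' : (0:ℝ) < x := hx
      have hnum : (0:ℝ) ≤ Real.exp s - 1 := by
        have := Real.one_le_exp hs; linarith
      have hden : (0:ℝ) ≤ (x + Real.exp s) * (x + 1) := by
        have := Real.exp_pos s; nlinarith
      exact div_nonneg hnum hden
    refine ⟨integrableOn_Ioi_deriv_of_nonneg hcont hderiv hpos (G_tendsto s), ?_⟩
    rw [integral_Ioi_of_hasDerivAt_of_nonneg hcont hderiv hpos (G_tendsto s)]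
    norm_num [Real.log_exp]
  · have hneg : ∀ x ∈ Ioi (0:ℝ), gg s x ≤ 0 := by
      intro x hx
      have hx' : (0:ℝ) < x := hx
      have hnum : Real.exp s - 1 ≤ 0 := by
        have : Real.exp s ≤ Real.exp 0 := Real.exp_le_exp.2 hs
        rw [Real.exp_zero] at this; linarith
      have hden : (0:ℝ) ≤ (x + Real.exp s) * (x + 1) := by
        have := Real.exp_pos s; nlinarith
      exact div_nonpos_of_nonpos_of_nonneg hnum hden
    refine ⟨integrableOn_Ioi_deriv_of_nonpos hcont hderiv hneg (G_tendsto s), ?_⟩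
    rw [integral_Ioi_of_hasDerivAt_of_nonpos hcont hderiv hneg (G_tendsto s)]
    norm_num [Real.log_exp]

lemma bound_int : IntegrableOn (fun t : ℝ => ((t + 1) * (t + 1))⁻¹) (Ioi 0) volume := by
  have hderiv : ∀ x ∈ Ici (0:ℝ),
      HasDerivAt (fun u : ℝ => -(u + 1)⁻¹) (((x + 1) * (x + 1))⁻¹) x := by
    intro x hx
    have hx' : (0:ℝ) ≤ x := hx
    have h1 : x + 1 ≠ 0 := by intro h; nlinarith [hx'.trans_eq (by linarith : x = x)]
    have hi : HasDerivAt (fun u : ℝ => u + 1) 1 x := (hasDerivAt_id x).add_const 1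
    have := (hi.inv h1).neg
    refine this.congr_deriv (Eq.symm ?_)
    rw [neg_div, neg_neg, one_div, sq]
  have hpos : ∀ x ∈ Ioi (0:ℝ), 0 ≤ ((x + 1) * (x + 1))⁻¹ := by
    intro x hx
    have hx' : (0:ℝ) < x := hx
    have : (0:ℝ) < (x + 1) * (x + 1) := by nlinarith
    exact (inv_pos.2 this).le
  have htend : Tendsto (fun u : ℝ => -(u + 1)⁻¹) atTop (𝓝 0) := by
    have := (tendsto_inv_atTop_zero.comp (tendsto_atTop_add_const_right atTop (1:ℝ) tendsto_id)).neg
    simpa using this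
  exact integrableOn_Ioi_deriv_of_nonneg' hderiv hpos htend

lemma fubini_gg {p q : ℝ} (hpq : p ≤ q) :
    IntegrableOn (fun t => ∫ s in Ioc p q, gg s t) (Ioi 0) volume ∧
    (∫ t in Ioi (0:ℝ), ∫ s in Ioc p q, gg s t) = (q ^ 2 - p ^ 2) / 2 := by
  have hmeas : Measurable fun z : ℝ × ℝ => gg z.2 z.1 := by
    unfold gg
    exact ((measurable_exp.comp measurable_snd).sub measurable_const).div
      (((measurable_fst.add (measurable_exp.comp measurable_snd)).mul
        (measurable_fst.add measurable_const)))
  set c := min 1 (Real.exp p) with hc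
  have hcpos : 0 < c := lt_min one_pos (Real.exp_pos p)
  set M := (Real.exp q + 1) / c with hM
  have hint : Integrable (Function.uncurry fun t s => gg s t)
      ((volume.restrict (Ioi (0:ℝ))).prod (volume.restrict (Ioc p q))) := by
    have hb : Integrable (fun z : ℝ × ℝ => (M * ((z.1 + 1) * (z.1 + 1))⁻¹) * 1)
        ((volume.restrict (Ioi (0:ℝ))).prod (volume.restrict (Ioc p q))) :=
      Integrable.mul_prod (bound_int.const_mul M)
        (integrableOn_const measure_Ioc_lt_top.ne)
    refine hb.mono' hmeas.aestronglyMeasurable ?_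
    rw [Measure.prod_restrict]
    filter_upwards [ae_restrict_mem (measurableSet_Ioi.prod measurableSet_Ioc)] with z hz
    obtain ⟨ht, hs⟩ := hz
    set t := z.1
    set s := z.2
    have ht' : (0:ℝ) < t := ht
    have hsp : p < s := hs.1
    have hsq : s ≤ q := hs.2
    have h1 : (0:ℝ) < t + 1 := by linarith
    have h2 : (0:ℝ) < t + Real.exp s := add_pos ht' (Real.exp_pos s)
    have hdpos : (0:ℝ) < (t + Real.exp s) * (t + 1) := mul_pos h2 h1
    have hnum : |Real.exp s - 1| ≤ Real.exp q + 1 := by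
      have h3 : Real.exp s ≤ Real.exp q := Real.exp_le_exp.2 hsq
      have h4 : (0:ℝ) < Real.exp s := Real.exp_pos s
      rw [abs_le]; constructor <;> nlinarith
    have hces : c ≤ Real.exp s := le_trans (min_le_right _ _) (Real.exp_le_exp.2 hsp.le)
    have hc1 : c ≤ 1 := min_le_left _ _
    have hstep : c * (t + 1) ≤ t + Real.exp s := by
      nlinarith [mul_nonneg (sub_nonneg.2 hc1) ht'.le]
    have hden : c * ((t + 1) * (t + 1)) ≤ (t + Real.exp s) * (t + 1) := by
      calc c * ((t + 1) * (t + 1)) = (c * (t + 1)) * (t + 1) := by ring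
        _ ≤ (t + Real.exp s) * (t + 1) := mul_le_mul_of_nonneg_right hstep h1.le
    have key : |gg s t| ≤ (Real.exp q + 1) / (c * ((t + 1) * (t + 1))) := by
      show |(Real.exp s - 1) / ((t + Real.exp s) * (t + 1))| ≤ _
      rw [abs_div, abs_of_pos hdpos]
      refine div_le_div₀ (by positivity) hnum (mul_pos hcpos (mul_pos h1 h1)) hden
    have heq : (Real.exp q + 1) / (c * ((t + 1) * (t + 1)))
        = M * ((t + 1) * (t + 1))⁻¹ * 1 := by
      rw [mul_one, hM, div_mul_eq_mul_div, ← div_eq_mul_inv, div_div, mul_comm ((t+1)*(t+1)) c]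
    calc ‖Function.uncurry (fun t s => gg s t) z‖ = |gg s t| := rfl
      _ ≤ (Real.exp q + 1) / (c * ((t + 1) * (t + 1))) := key
      _ = M * ((t + 1) * (t + 1))⁻¹ * 1 := heq
  constructor
  · exact hint.integral_prod_left
  · have swap := integral_integral_swap (f := fun t s => gg s t) hint
    rw [swap]
    have hval : ∀ s : ℝ, (∫ t in Ioi (0:ℝ), gg s t) = s := fun s => (gg_int s).2
    calc (∫ s in Ioc p q, ∫ t in Ioi (0:ℝ), gg s t)
        = ∫ s in Ioc p q, s := by
          refine setIntegral_congr_fun measurableSet_Ioc fun s _ => hval s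
      _ = ∫ s in p..q, s := (intervalIntegral.integral_of_le hpq).symm
      _ = (q ^ 2 - p ^ 2) / 2 := integral_id

lemma ff_eq (z : ℝ) {t : ℝ} (ht : 0 < t) : ff z t = ∫ s in (0:ℝ)..z, gg s t := by
  have h1 : (0:ℝ) < t + 1 := by linarith
  have key : ∀ s : ℝ, HasDerivAt (fun u => (Real.log (t + Real.exp u) - u / (t + 1)) / t)
      (gg s t) s := by
    intro s
    have h2 : (0:ℝ) < t + Real.exp s := add_pos ht (Real.exp_pos s)
    have d1 : HasDerivAt (fun u : ℝ => Real.log (t + Real.exp u))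
        ((t + Real.exp s)⁻¹ * Real.exp s) s := by
      have de : HasDerivAt (fun u : ℝ => t + Real.exp u) (Real.exp s) s :=
        (Real.hasDerivAt_exp s).const_add t
      exact (Real.hasDerivAt_log h2.ne').comp s de
    have d2 : HasDerivAt (fun u : ℝ => u / (t + 1)) ((t + 1)⁻¹) s := by
      simpa using (hasDerivAt_id s).div_const (t + 1)
    have := (d1.sub d2).div_const t
    refine this.congr_deriv (Eq.symm ?_)
    unfold gg
    rw [div_eq_div_iff (by positivity) ht.ne']
    field_simp
    ring
  have hcont : IntervalIntegrable (fun s => gg s t) volume 0 z := by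
    apply Continuous.intervalIntegrable
    unfold gg
    refine (continuous_exp.sub continuous_const).div
      ((continuous_const.add continuous_exp).mul continuous_const) fun s => ?_
    have h2 : (0:ℝ) < t + Real.exp s := add_pos ht (Real.exp_pos s)
    exact (mul_pos h2 h1).ne'
  have hftc := intervalIntegral.integral_eq_sub_of_hasDerivAt (fun s _ => key s) hcont
  rw [hftc]
  unfold ff
  simp only [Real.exp_zero, zero_div, sub_zero]
  ring

lemma ff_int (z : ℝ) :
    IntegrableOn (ff z) (Ioi 0) volume ∧ (∫ t in Ioi (0:ℝ), ff z t) = z ^ 2 / 2 := by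
  rcases le_total 0 z with hz | hz
  · have heq : ∀ t ∈ Ioi (0:ℝ), ff z t = ∫ s in Ioc 0 z, gg s t := by
      intro t ht
      rw [ff_eq z ht, intervalIntegral.integral_of_le hz]
    obtain ⟨hint, hval⟩ := fubini_gg hz
    refine ⟨hint.congr_fun (fun t ht => (heq t ht).symm) measurableSet_Ioi, ?_⟩
    rw [setIntegral_congr_fun measurableSet_Ioi heq, hval]
    ring
  · have heq : ∀ t ∈ Ioi (0:ℝ), ff z t = -∫ s in Ioc z 0, gg s t := by
      intro t ht
      rw [ff_eq z ht, intervalIntegral.integral_symm z 0,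
        intervalIntegral.integral_of_le hz]
    obtain ⟨hint, hval⟩ := fubini_gg hz
    refine ⟨IntegrableOn.congr_fun hint.neg (fun t ht => (heq t ht).symm) measurableSet_Ioi, ?_⟩
    rw [setIntegral_congr_fun measurableSet_Ioi heq, integral_neg, hval]
    ring

theorem stmt_1 (c1 c2 c3 z1 z2 z3 : ℝ)
    (h1 : Real.exp z1 + Real.exp z2 + Real.exp z3 ≥ Real.exp c1 + Real.exp c2 + Real.exp c3)
    (h2 : Real.exp (-z1) + Real.exp (-z2) + Real.exp (-z3) ≥
      Real.exp (-c1) + Real.exp (-c2) + Real.exp (-c3))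
    (h3 : z1 + z2 + z3 = c1 + c2 + c3) :
    z1^2 + z2^2 + z3^2 ≥ c1^2 + c2^2 + c3^2 := by
  obtain ⟨Iz1, Vz1⟩ := ff_int z1
  obtain ⟨Iz2, Vz2⟩ := ff_int z2
  obtain ⟨Iz3, Vz3⟩ := ff_int z3
  obtain ⟨Ic1, Vc1⟩ := ff_int c1
  obtain ⟨Ic2, Vc2⟩ := ff_int c2
  obtain ⟨Ic3, Vc3⟩ := ff_int c3
  have hz12 : IntegrableOn (fun t => ff z1 t + ff z2 t) (Ioi 0) volume := Iz1.add Iz2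
  have hz123 : IntegrableOn (fun t => ff z1 t + ff z2 t + ff z3 t) (Ioi 0) volume := hz12.add Iz3
  have hc12 : IntegrableOn (fun t => ff c1 t + ff c2 t) (Ioi 0) volume := Ic1.add Ic2
  have hc123 : IntegrableOn (fun t => ff c1 t + ff c2 t + ff c3 t) (Ioi 0) volume := hc12.add Ic3
  have ez : (∫ t in Ioi (0:ℝ), (ff z1 t + ff z2 t + ff z3 t))
      = z1 ^ 2 / 2 + z2 ^ 2 / 2 + z3 ^ 2 / 2 := by
    rw [integral_add hz12 Iz3, integral_add Iz1 Iz2, Vz1, Vz2, Vz3]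
  have ec : (∫ t in Ioi (0:ℝ), (ff c1 t + ff c2 t + ff c3 t))
      = c1 ^ 2 / 2 + c2 ^ 2 / 2 + c3 ^ 2 / 2 := by
    rw [integral_add hc12 Ic3, integral_add Ic1 Ic2, Vc1, Vc2, Vc3]
  have etot : (∫ t in Ioi (0:ℝ),
      ((ff z1 t + ff z2 t + ff z3 t) - (ff c1 t + ff c2 t + ff c3 t)))
      = (z1 ^ 2 / 2 + z2 ^ 2 / 2 + z3 ^ 2 / 2) - (c1 ^ 2 / 2 + c2 ^ 2 / 2 + c3 ^ 2 / 2) := by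
    rw [integral_sub hz123 hc123, ez, ec]
  have hnn : ∀ t ∈ Ioi (0:ℝ),
      0 ≤ (ff z1 t + ff z2 t + ff z3 t) - (ff c1 t + ff c2 t + ff c3 t) := by
    intro t ht
    have ht' : (0:ℝ) < t := ht
    have h1t : (0:ℝ) < t + 1 := by linarith
    have pz1 : (0:ℝ) < t + Real.exp z1 := add_pos ht' (Real.exp_pos _)
    have pz2 : (0:ℝ) < t + Real.exp z2 := add_pos ht' (Real.exp_pos _)
    have pz3 : (0:ℝ) < t + Real.exp z3 := add_pos ht' (Real.exp_pos _)
    have pc1 : (0:ℝ) < t + Real.exp c1 := add_pos ht' (Real.exp_pos _)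
    have pc2 : (0:ℝ) < t + Real.exp c2 := add_pos ht' (Real.exp_pos _)
    have pc3 : (0:ℝ) < t + Real.exp c3 := add_pos ht' (Real.exp_pos _)
    have comb : (ff z1 t + ff z2 t + ff z3 t) - (ff c1 t + ff c2 t + ff c3 t)
        = ((Real.log (t + Real.exp z1) + Real.log (t + Real.exp z2)
            + Real.log (t + Real.exp z3))
          - (Real.log (t + Real.exp c1) + Real.log (t + Real.exp c2)
            + Real.log (t + Real.exp c3))
          - ((z1 + z2 + z3) - (c1 + c2 + c3)) / (t + 1)) / t := by
      unfold ff
      ring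
    rw [comb, h3, sub_self, zero_div, sub_zero]
    apply div_nonneg _ ht'.le
    rw [sub_nonneg]
    have lz : Real.log (t + Real.exp z1) + Real.log (t + Real.exp z2)
        + Real.log (t + Real.exp z3)
        = Real.log ((t + Real.exp z1) * (t + Real.exp z2) * (t + Real.exp z3)) := by
      rw [Real.log_mul (mul_pos pz1 pz2).ne' pz3.ne', Real.log_mul pz1.ne' pz2.ne']
    have lc : Real.log (t + Real.exp c1) + Real.log (t + Real.exp c2)
        + Real.log (t + Real.exp c3)
        = Real.log ((t + Real.exp c1) * (t + Real.exp c2) * (t + Real.exp c3)) := by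
      rw [Real.log_mul (mul_pos pc1 pc2).ne' pc3.ne', Real.log_mul pc1.ne' pc2.ne']
    rw [lz, lc]
    apply Real.log_le_log (mul_pos (mul_pos pc1 pc2) pc3)
    have E3 : Real.exp z1 * Real.exp z2 * Real.exp z3
        = Real.exp c1 * Real.exp c2 * Real.exp c3 := by
      rw [← Real.exp_add, ← Real.exp_add, ← Real.exp_add, ← Real.exp_add, h3]
    have expand : ∀ x y w : ℝ, Real.exp (x + y + w)
        * (Real.exp (-x) + Real.exp (-y) + Real.exp (-w))
        = Real.exp y * Real.exp w + Real.exp x * Real.exp w + Real.exp x * Real.exp y := by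
      intro x y w
      rw [mul_add, mul_add, ← Real.exp_add, ← Real.exp_add, ← Real.exp_add,
        show x + y + w + -x = y + w by ring, show x + y + w + -y = x + w by ring,
        show x + y + w + -w = x + y by ring, Real.exp_add, Real.exp_add, Real.exp_add]
    have E2 : Real.exp c2 * Real.exp c3 + Real.exp c1 * Real.exp c3
        + Real.exp c1 * Real.exp c2
        ≤ Real.exp z2 * Real.exp z3 + Real.exp z1 * Real.exp z3
        + Real.exp z1 * Real.exp z2 := by
      have hmul := mul_le_mul_of_nonneg_left h2.le (Real.exp_pos (z1 + z2 + z3)).le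
      rw [expand z1 z2 z3] at hmul
      rw [h3, expand c1 c2 c3] at hmul
      exact hmul
    have E1 : Real.exp c1 + Real.exp c2 + Real.exp c3
        ≤ Real.exp z1 + Real.exp z2 + Real.exp z3 := h1
    nlinarith [mul_nonneg (mul_nonneg ht'.le ht'.le) (sub_nonneg.2 E1),
      mul_nonneg ht'.le (sub_nonneg.2 E2), E3]
  have hpos0 : 0 ≤ ∫ t in Ioi (0:ℝ),
      ((ff z1 t + ff z2 t + ff z3 t) - (ff c1 t + ff c2 t + ff c3 t)) :=
    setIntegral_nonneg measurableSet_Ioi hnn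
  rw [etot] at hpos0
  linarith
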